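/- Let p be an odd prime with p ≡ -3 (mod 8) (equivalently p ≡ 5 (mod 8)). Then the linear complexity over Z_4 of the quaternary sequence (s_u)_{u≥0} equals 2p. -/

import Mathlib

open Polynomial Finset

/-- The generalized cyclotomic class `D_i = {g^(2n+i) mod 2p : n = 0,...,(p-3)/2}` in `Z_{2p}`. -/
def Dcl (p g : ℕ) (i : ℕ) : Finset (ZMod (2 * p)) :=
  (Finset.range ((p - 1) / 2)).image (fun n => (g : ZMod (2 * p)) ^ (2 * n + i))

/-- The generalized cyclotomic class `E_i = {2u mod 2p : u ∈ D_i}` in `Z_{2p}`. -/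
def Ecl (p g : ℕ) (i : ℕ) : Finset (ZMod (2 * p)) :=
  (Dcl p g i).image (fun u => 2 * u)

/-- The quaternary sequence `(s_u)` over `Z_4` of period `2p`. -/
def seqS (p g : ℕ) (u : ℕ) : ZMod 4 :=
  if (u : ZMod (2 * p)) = 0 ∨ (u : ZMod (2 * p)) ∈ Dcl p g 0 then 0
  else if (u : ZMod (2 * p)) ∈ Dcl p g 1 then 1
  else if (u : ZMod (2 * p)) = (p : ZMod (2 * p)) ∨ (u : ZMod (2 * p)) ∈ Ecl p g 0 then 2
  else 3

/-- The generating polynomial `S(X) = s_0 + s_1 X + ... + s_{2p-1} X^{2p-1} ∈ Z_4[X]`. -/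
noncomputable def genPoly (p g : ℕ) : Polynomial (ZMod 4) :=
  ∑ u ∈ Finset.range (2 * p), Polynomial.C (seqS p g u) * Polynomial.X ^ u

/-- The linear complexity over `Z_4` of the sequence `(s_u)`:
`min{ deg C : C ∈ Z_4[X], C(0) = 1, S(X)C(X) ≡ 0 (mod X^{2p} - 1) }`. -/
noncomputable def linComplexity (p g : ℕ) : ℕ :=
  sInf { L | ∃ C : Polynomial (ZMod 4), C.eval 0 = 1 ∧ C.natDegree = L ∧
      (Polynomial.X ^ (2 * p) - 1) ∣ genPoly p g * C }

namespace QAux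

/-- divisibility of a termwise-reduced sum -/
lemma dvd_sum_mod {R : Type*} [CommRing R] (f : ℕ → R) (n m : ℕ) :
    (X ^ m - 1 : R[X]) ∣
      (∑ u ∈ Finset.range n, C (f u) * X ^ u) -
        ∑ u ∈ Finset.range n, C (f u) * X ^ (u % m) := by
  rw [← Finset.sum_sub_distrib]
  apply Finset.dvd_sum
  intro u _
  have h1 : C (f u) * X ^ u - C (f u) * X ^ (u % m)
      = C (f u) * X ^ (u % m) * ((X ^ m) ^ (u / m) - 1) := by
    have : (X : R[X]) ^ u = X ^ (u % m) * (X ^ m) ^ (u / m) := by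
      rw [← pow_mul, ← pow_add]
      congr 1
      exact (Nat.mod_add_div u m).symm
    rw [this]; ring
  rw [h1]
  exact Dvd.dvd.mul_left (by simpa using sub_dvd_pow_sub_pow ((X:R[X])^m) 1 (u/m)) _

lemma sum_range_eq_sum_univ {M : Type*} [AddCommMonoid M] {n : ℕ} [NeZero n]
    (f : ZMod n → ℕ → M) :
    ∑ u ∈ Finset.range n, f (u : ZMod n) u = ∑ x : ZMod n, f x x.val := by
  refine Finset.sum_nbij' (fun u => (u : ZMod n)) (fun x => x.val)
    (fun a _ => Finset.mem_univ _) (fun x _ => Finset.mem_range.mpr (ZMod.val_lt x))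
    (fun a ha => ZMod.val_cast_of_lt (Finset.mem_range.mp ha))
    (fun x _ => ZMod.natCast_zmod_val x) (fun a ha => ?_)
  rw [ZMod.val_cast_of_lt (Finset.mem_range.mp ha)]

lemma pow_inj_grp {G : Type*} [Group G] (x : G) {a b : ℕ}
    (ha : a < orderOf x) (hb : b < orderOf x) (h : x ^ a = x ^ b) : a = b :=
  pow_injOn_Iio_orderOf ha hb h

lemma pow_inj_unit {M : Type*} [CommMonoid M] {x : M} (hx : IsUnit x) {a b : ℕ}
    (ha : a < orderOf x) (hb : b < orderOf x) (h : x ^ a = x ^ b) : a = b := by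
  obtain ⟨u, rfl⟩ := hx
  rw [orderOf_units] at ha hb
  exact pow_inj_grp u ha hb (Units.ext (by simpa using h))

/-- polynomial with all coefficients mapping to zero mod 2 is 2 * something -/
lemma exists_halve {Q : Polynomial (ZMod 4)}
    (h : Q.map (ZMod.castHom (by norm_num : (2:ℕ) ∣ 4) (ZMod 2)) = 0) :
    ∃ Q' : Polynomial (ZMod 4), Q = Polynomial.C 2 * Q' := by
  set φ := ZMod.castHom (by norm_num : (2:ℕ) ∣ 4) (ZMod 2)
  have hc : ∀ k, φ (Q.coeff k) = 0 := by
    intro k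
    have := congrArg (fun P => Polynomial.coeff P k) h
    simpa [Polynomial.coeff_map] using this
  have key : ∀ a : ZMod 4, φ a = 0 → a = 2 * (if a = 2 then 1 else 0) := by decide
  refine ⟨∑ k ∈ Finset.range (Q.natDegree + 1),
      Polynomial.C (if Q.coeff k = 2 then 1 else 0) * X ^ k, ?_⟩
  ext n
  rw [Polynomial.coeff_C_mul, Polynomial.finset_sum_coeff]
  simp only [Polynomial.coeff_C_mul, Polynomial.coeff_mul_C, Polynomial.coeff_X_pow]
  by_cases hn : n ≤ Q.natDegree
  · rw [Finset.sum_eq_single n]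
    · simpa using key _ (hc n)
    · intro b _ hb; simp [Ne.symm hb]
    · intro hmem; exact absurd (Finset.mem_range.mpr (by omega)) hmem
  · rw [Polynomial.coeff_eq_zero_of_natDegree_lt (by omega), Finset.sum_eq_zero ?_]
    · simp
    · intro b hb
      have : ¬ (n = b) := by rw [Finset.mem_range] at hb; omega
      simp [this]

lemma map_eq_zero_of_two_mul {P : Polynomial (ZMod 4)}
    (h : Polynomial.C (2 : ZMod 4) * P = 0) :
    P.map (ZMod.castHom (by norm_num : (2:ℕ) ∣ 4) (ZMod 2)) = 0 := by
  set φ := ZMod.castHom (by norm_num : (2:ℕ) ∣ 4) (ZMod 2)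
  have key : ∀ a : ZMod 4, 2 * a = 0 → φ a = 0 := by decide
  ext n
  have := congrArg (fun P => Polynomial.coeff P n) h
  simp only [Polynomial.coeff_C_mul, Polynomial.coeff_zero] at this
  simp [Polynomial.coeff_map, key _ this]



def par (p : ℕ) : ZMod (2*p) →+* ZMod 2 := ZMod.castHom ⟨p, rfl⟩ (ZMod 2)

def rho (p : ℕ) : ZMod (2*p) →+* ZMod p := ZMod.castHom ⟨2, mul_comm 2 p⟩ (ZMod p)

def vfun (p g : ℕ) (x : ZMod (2*p)) : ZMod 4 :=
  if x = 0 ∨ x ∈ Dcl p g 0 then 0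
  else if x ∈ Dcl p g 1 then 1
  else if x = (p : ZMod (2*p)) ∨ x ∈ Ecl p g 0 then 2
  else 3

lemma seqS_eq_vfun (p g u : ℕ) : seqS p g u = vfun p g (u : ZMod (2*p)) := rfl

section Main

variable {p g : ℕ}

lemma cast2_one {m : ℕ} (hm : m % 2 = 1) : ((m : ℕ) : ZMod 2) = 1 := by
  rw [← ZMod.natCast_mod, hm, Nat.cast_one]

lemma cast2_zero {m : ℕ} (hm : m % 2 = 0) : ((m : ℕ) : ZMod 2) = 0 := by
  rw [← ZMod.natCast_mod, hm, Nat.cast_zero]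

lemma mem_Dcl {i : ℕ} {x : ZMod (2*p)} :
    x ∈ Dcl p g i ↔ ∃ n, n < (p-1)/2 ∧ (g : ZMod (2*p)) ^ (2*n+i) = x := by
  simp [Dcl, Finset.mem_image, Finset.mem_range]

lemma mem_Ecl {i : ℕ} {x : ZMod (2*p)} :
    x ∈ Ecl p g i ↔ ∃ n, n < (p-1)/2 ∧ 2 * (g : ZMod (2*p)) ^ (2*n+i) = x := by
  simp only [Ecl, Finset.mem_image, mem_Dcl]
  constructor
  · rintro ⟨u, ⟨n, hn, rfl⟩, rfl⟩; exact ⟨n, hn, rfl⟩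
  · rintro ⟨n, hn, rfl⟩; exact ⟨_, ⟨n, hn, rfl⟩, rfl⟩

lemma gunit (hp8 : p % 8 = 5) (hg2 : orderOf (g : ZMod (2 * p)) = p - 1) :
    IsUnit (g : ZMod (2*p)) := by
  have h1 : ((g : ZMod (2*p)))^(p-1) = 1 := by rw [← hg2]; exact pow_orderOf_eq_one _
  refine IsUnit.of_mul_eq_one ((g : ZMod (2*p))^(p-2)) ?_
  rw [← pow_succ']
  rw [show p - 2 + 1 = p - 1 by omega]
  exact h1

lemma pow_inj2p (hp8 : p % 8 = 5) (hg2 : orderOf (g : ZMod (2 * p)) = p - 1)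
    {a b : ℕ} (ha : a < p - 1) (hb : b < p - 1)
    (h : (g : ZMod (2*p))^a = (g : ZMod (2*p))^b) : a = b :=
  pow_inj_unit (gunit hp8 hg2) (by rw [hg2]; exact ha) (by rw [hg2]; exact hb) h

lemma gunitp (hp : p.Prime) (hg1 : orderOf (g : ZMod p) = p - 1) (hp8 : p % 8 = 5) :
    IsUnit (g : ZMod p) := by
  have h1 : ((g : ZMod p))^(p-1) = 1 := by rw [← hg1]; exact pow_orderOf_eq_one _
  refine IsUnit.of_mul_eq_one ((g : ZMod p)^(p-2)) ?_
  rw [← pow_succ']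
  rw [show p - 2 + 1 = p - 1 by omega]
  exact h1

lemma pow_injp (hp : p.Prime) (hp8 : p % 8 = 5) (hg1 : orderOf (g : ZMod p) = p - 1)
    {a b : ℕ} (ha : a < p - 1) (hb : b < p - 1)
    (h : (g : ZMod p)^a = (g : ZMod p)^b) : a = b :=
  pow_inj_unit (gunitp hp hg1 hp8) (by rw [hg1]; exact ha) (by rw [hg1]; exact hb) h

lemma par_apply [NeZero (2*p)] (x : ZMod (2*p)) : par p x = ((x.val : ℕ) : ZMod 2) := by
  rw [par, ZMod.castHom_apply, ← ZMod.natCast_val]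

lemma par_g (hgodd : Odd g) : par p ((g : ℕ) : ZMod (2*p)) = 1 := by
  rw [map_natCast]
  exact cast2_one (Nat.odd_iff.mp hgodd)

lemma par_p (hp8 : p % 8 = 5) : par p ((p : ℕ) : ZMod (2*p)) = 1 := by
  rw [map_natCast]
  exact cast2_one (by omega)

lemma par_mem_D (hgodd : Odd g) {i : ℕ} {x : ZMod (2*p)} (hx : x ∈ Dcl p g i) :
    par p x = 1 := by
  obtain ⟨n, hn, rfl⟩ := mem_Dcl.mp hx
  rw [map_pow, par_g hgodd, one_pow]

lemma par_mem_E {i : ℕ} {x : ZMod (2*p)} (hx : x ∈ Ecl p g i) : par p x = 0 := by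
  obtain ⟨n, hn, rfl⟩ := mem_Ecl.mp hx
  rw [map_mul]
  have : par p (2 : ZMod (2*p)) = 0 := by
    have : ((2:ℕ) : ZMod (2*p)) = (2 : ZMod (2*p)) := by push_cast; ring
    rw [← this, map_natCast]
    exact cast2_zero rfl
  rw [this, zero_mul]

lemma p_ne_zero (hp8 : p % 8 = 5) : ((p : ℕ) : ZMod (2*p)) ≠ 0 := by
  rw [Ne, ZMod.natCast_eq_zero_iff]
  intro h
  have := Nat.le_of_dvd (by omega) h
  omega

lemma two_ne_zero2p (hp8 : p % 8 = 5) : ((2 : ℕ) : ZMod (2*p)) ≠ 0 := by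
  rw [Ne, ZMod.natCast_eq_zero_iff]
  intro h
  have := Nat.le_of_dvd (by omega) h
  omega

lemma p_not_unit (hp8 : p % 8 = 5) : ¬ IsUnit ((p : ℕ) : ZMod (2*p)) := by
  intro h
  obtain ⟨y, hy⟩ := h.exists_right_inv
  have h0 : ((2*p : ℕ) : ZMod (2*p)) = 0 := ZMod.natCast_self _
  have : ((2:ℕ) : ZMod (2*p)) = 0 := by
    calc ((2:ℕ) : ZMod (2*p)) = ((2:ℕ) : ZMod (2*p)) * (((p:ℕ) : ZMod (2*p)) * y) := by
          rw [hy, mul_one]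
      _ = ((2*p : ℕ) : ZMod (2*p)) * y := by push_cast; ring
      _ = 0 := by rw [h0, zero_mul]
  exact two_ne_zero2p hp8 this

lemma mem_D_unit (hp8 : p % 8 = 5) (hg2 : orderOf (g : ZMod (2 * p)) = p - 1)
    {i : ℕ} {x : ZMod (2*p)} (hx : x ∈ Dcl p g i) : IsUnit x := by
  obtain ⟨n, hn, rfl⟩ := mem_Dcl.mp hx
  exact (gunit hp8 hg2).pow _

lemma D_ne_zero (hp8 : p % 8 = 5) (hg2 : orderOf (g : ZMod (2 * p)) = p - 1)
    {i : ℕ} {x : ZMod (2*p)} (hx : x ∈ Dcl p g i) : x ≠ 0 := by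
  haveI : Fact (1 < 2*p) := ⟨by omega⟩
  exact (mem_D_unit hp8 hg2 hx).ne_zero

lemma D_ne_p (hp8 : p % 8 = 5) (hg2 : orderOf (g : ZMod (2 * p)) = p - 1)
    {i : ℕ} {x : ZMod (2*p)} (hx : x ∈ Dcl p g i) : x ≠ ((p:ℕ) : ZMod (2*p)) := by
  intro h
  exact p_not_unit hp8 (h ▸ mem_D_unit hp8 hg2 hx)

lemma E_ne_zero (hp : p.Prime) (hp8 : p % 8 = 5) (hg2 : orderOf (g : ZMod (2 * p)) = p - 1)
    {i : ℕ} {x : ZMod (2*p)} (hx : x ∈ Ecl p g i) : x ≠ 0 := by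
  haveI : Fact p.Prime := ⟨hp⟩
  obtain ⟨n, hn, rfl⟩ := mem_Ecl.mp hx
  intro h
  have := congrArg (rho p) h
  rw [map_mul, map_zero, map_pow] at this
  have hg : rho p ((g:ℕ) : ZMod (2*p)) = ((g:ℕ) : ZMod p) := map_natCast _ _
  rw [hg] at this
  have h2 : (rho p (2 : ZMod (2*p))) = (2 : ZMod p) := map_ofNat _ _
  rw [h2] at this
  have hgu : IsUnit ((g:ℕ) : ZMod p) := by
    have := (gunit hp8 hg2).map (rho p)
    rwa [hg] at this
  have htwo : (2 : ZMod p) ≠ 0 := by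
    have : ((2:ℕ) : ZMod p) ≠ 0 := by
      rw [Ne, ZMod.natCast_eq_zero_iff]
      intro hh
      have := Nat.le_of_dvd (by omega) hh
      omega
    simpa using this
  exact (mul_ne_zero htwo (pow_ne_zero _ hgu.ne_zero)) this

lemma mul2_inj (hp8 : p % 8 = 5) [NeZero (2*p)] {x y : ZMod (2*p)}
    (hpar : par p x = par p y) (h : 2 * x = 2 * y) : x = y := by
  have h2d : (2 : ZMod (2*p)) * (x - y) = 0 := by rw [mul_sub, h, sub_self]
  set d := x - y with hd
  have hval : ((d.val : ℕ) : ZMod (2*p)) = d := ZMod.natCast_zmod_val d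
  have h0 : ((2 * d.val : ℕ) : ZMod (2*p)) = 0 := by
    push_cast
    rw [hval]
    exact h2d
  rw [ZMod.natCast_eq_zero_iff] at h0
  obtain ⟨k, hk⟩ := h0
  have hlt : d.val < 2*p := ZMod.val_lt d
  have hk1 : d.val = 0 ∨ d.val = p := by
    rcases Nat.lt_or_ge k 2 with hk2 | hk2
    · interval_cases k <;> omega
    · exfalso
      have h4 : 2*p*2 ≤ 2*p*k := Nat.mul_le_mul_left _ hk2
      omega
  rcases hk1 with h1 | h1
  · have : d = 0 := by rwa [ZMod.val_eq_zero] at h1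
    rw [hd] at this
    exact sub_eq_zero.mp this
  · exfalso
    have hpd : par p d = 0 := by rw [hd, map_sub, hpar, sub_self]
    rw [par_apply, h1, cast2_one (by omega)] at hpd
    exact one_ne_zero hpd

lemma card_D (hp8 : p % 8 = 5) (hg2 : orderOf (g : ZMod (2 * p)) = p - 1)
    {i : ℕ} (hi : i ≤ 1) : (Dcl p g i).card = (p-1)/2 := by
  rw [Dcl, Finset.card_image_of_injOn, Finset.card_range]
  intro a ha b hb hab
  simp only [Finset.coe_range, Set.mem_Iio] at ha hb
  have := pow_inj2p hp8 hg2 (a := 2*a+i) (b := 2*b+i) (by omega) (by omega) hab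
  omega

lemma card_E (hp8 : p % 8 = 5) (hgodd : Odd g) (hg2 : orderOf (g : ZMod (2 * p)) = p - 1)
    [NeZero (2*p)] {i : ℕ} (hi : i ≤ 1) : (Ecl p g i).card = (p-1)/2 := by
  rw [Ecl, Finset.card_image_of_injOn, card_D hp8 hg2 hi]
  intro a ha b hb hab
  exact mul2_inj hp8 (by rw [par_mem_D hgodd ha, par_mem_D hgodd hb]) hab

lemma disj_D (hp8 : p % 8 = 5) (hg2 : orderOf (g : ZMod (2 * p)) = p - 1) :
    Disjoint (Dcl p g 0) (Dcl p g 1) := by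
  rw [Finset.disjoint_left]
  intro x hx0 hx1
  obtain ⟨n, hn, h0⟩ := mem_Dcl.mp hx0
  obtain ⟨m, hm, h1⟩ := mem_Dcl.mp hx1
  have := pow_inj2p hp8 hg2 (a := 2*n+0) (b := 2*m+1) (by omega) (by omega) (h0.trans h1.symm)
  omega

lemma disj_E (hp8 : p % 8 = 5) (hgodd : Odd g) (hg2 : orderOf (g : ZMod (2 * p)) = p - 1)
    [NeZero (2*p)] : Disjoint (Ecl p g 0) (Ecl p g 1) := by
  rw [Finset.disjoint_left]
  intro x hx0 hx1
  obtain ⟨n, hn, h0⟩ := mem_Ecl.mp hx0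
  obtain ⟨m, hm, h1⟩ := mem_Ecl.mp hx1
  have heq := mul2_inj hp8 (x := (g : ZMod (2*p))^(2*n+0)) (y := (g : ZMod (2*p))^(2*m+1)) ?_ ?_
  · have := pow_inj2p hp8 hg2 (a := 2*n+0) (b := 2*m+1) (by omega) (by omega) heq
    omega
  · rw [map_pow, map_pow, par_g hgodd, one_pow, one_pow]
  · rw [h0, h1]

lemma count_par (hp8 : p % 8 = 5) [NeZero (2*p)] :
    ((Finset.univ.filter (fun x : ZMod (2*p) => par p x = 1)).card = p ∧
     (Finset.univ.filter (fun x : ZMod (2*p) => par p x = 0)).card = p) := by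
  have hinj : ∀ (c : ℕ), c < 2 → Set.InjOn (fun k : ℕ => ((2*k+c : ℕ) : ZMod (2*p)))
      (Finset.range p : Finset ℕ) := by
    intro c hc a ha b hb hab
    simp only [Finset.coe_range, Set.mem_Iio] at ha hb
    have h1 := congrArg ZMod.val hab
    rw [ZMod.val_natCast, ZMod.val_natCast, Nat.mod_eq_of_lt (by omega),
      Nat.mod_eq_of_lt (by omega)] at h1
    omega
  have hodd : p ≤ ((Finset.univ.filter (fun x : ZMod (2*p) => par p x = 1)).card) := by
    have hsub : (Finset.range p).image (fun k : ℕ => ((2*k+1 : ℕ) : ZMod (2*p))) ⊆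
        Finset.univ.filter (fun x : ZMod (2*p) => par p x = 1) := by
      intro x hx
      obtain ⟨k, _, rfl⟩ := Finset.mem_image.mp hx
      refine Finset.mem_filter.mpr ⟨Finset.mem_univ _, ?_⟩
      rw [map_natCast]
      exact cast2_one (by omega)
    calc p = ((Finset.range p).image (fun k : ℕ => ((2*k+1 : ℕ) : ZMod (2*p)))).card := by
          rw [Finset.card_image_of_injOn (hinj 1 (by omega)), Finset.card_range]
      _ ≤ _ := Finset.card_le_card hsub
  have heven : p ≤ ((Finset.univ.filter (fun x : ZMod (2*p) => par p x = 0)).card) := by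
    have hsub : (Finset.range p).image (fun k : ℕ => ((2*k+0 : ℕ) : ZMod (2*p))) ⊆
        Finset.univ.filter (fun x : ZMod (2*p) => par p x = 0) := by
      intro x hx
      obtain ⟨k, _, rfl⟩ := Finset.mem_image.mp hx
      refine Finset.mem_filter.mpr ⟨Finset.mem_univ _, ?_⟩
      rw [map_natCast]
      exact cast2_zero (by omega)
    calc p = ((Finset.range p).image (fun k : ℕ => ((2*k+0 : ℕ) : ZMod (2*p)))).card := by
          rw [Finset.card_image_of_injOn (hinj 0 (by omega)), Finset.card_range]
      _ ≤ _ := Finset.card_le_card hsub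
  have htot : (Finset.univ.filter (fun x : ZMod (2*p) => par p x = 1)).card +
      (Finset.univ.filter (fun x : ZMod (2*p) => ¬ (par p x = 1))).card = 2*p := by
    rw [Finset.card_filter_add_card_filter_not]
    · rw [Finset.card_univ, ZMod.card]
  have hcongr : (Finset.univ.filter (fun x : ZMod (2*p) => ¬ (par p x = 1))) =
      (Finset.univ.filter (fun x : ZMod (2*p) => par p x = 0)) := by
    apply Finset.filter_congr
    intro x _
    have : ∀ a : ZMod 2, (¬ (a = 1)) ↔ a = 0 := by decide
    simp [this]
  rw [hcongr] at htot
  omega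

lemma odd_filter (hp8 : p % 8 = 5) (hgodd : Odd g) (hg2 : orderOf (g : ZMod (2 * p)) = p - 1)
    [NeZero (2*p)] :
    Finset.univ.filter (fun x : ZMod (2*p) => par p x = 1)
      = insert ((p:ℕ) : ZMod (2*p)) (Dcl p g 0 ∪ Dcl p g 1) := by
  have hnotmem : ((p:ℕ) : ZMod (2*p)) ∉ Dcl p g 0 ∪ Dcl p g 1 := by
    intro h
    rcases Finset.mem_union.mp h with h | h
    · exact D_ne_p hp8 hg2 h rfl
    · exact D_ne_p hp8 hg2 h rfl
  have hcard : (insert ((p:ℕ) : ZMod (2*p)) (Dcl p g 0 ∪ Dcl p g 1)).card = p := by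
    rw [Finset.card_insert_of_notMem hnotmem,
      Finset.card_union_of_disjoint (disj_D hp8 hg2),
      card_D hp8 hg2 (by omega), card_D hp8 hg2 (by omega)]
    omega
  refine (Finset.eq_of_subset_of_card_le ?_ ?_).symm
  · intro x hx
    refine Finset.mem_filter.mpr ⟨Finset.mem_univ _, ?_⟩
    rcases Finset.mem_insert.mp hx with rfl | hx
    · exact par_p hp8
    · rcases Finset.mem_union.mp hx with h | h
      · exact par_mem_D hgodd h
      · exact par_mem_D hgodd h
  · rw [hcard, (count_par hp8).1]

lemma even_filter (hp : p.Prime) (hp8 : p % 8 = 5) (hgodd : Odd g)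
    (hg2 : orderOf (g : ZMod (2 * p)) = p - 1) [NeZero (2*p)] :
    Finset.univ.filter (fun x : ZMod (2*p) => par p x = 0)
      = insert (0 : ZMod (2*p)) (Ecl p g 0 ∪ Ecl p g 1) := by
  have hnotmem : (0 : ZMod (2*p)) ∉ Ecl p g 0 ∪ Ecl p g 1 := by
    intro h
    rcases Finset.mem_union.mp h with h | h
    · exact E_ne_zero hp hp8 hg2 h rfl
    · exact E_ne_zero hp hp8 hg2 h rfl
  have hcard : (insert (0 : ZMod (2*p)) (Ecl p g 0 ∪ Ecl p g 1)).card = p := by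
    rw [Finset.card_insert_of_notMem hnotmem,
      Finset.card_union_of_disjoint (disj_E hp8 hgodd hg2),
      card_E hp8 hgodd hg2 (by omega), card_E hp8 hgodd hg2 (by omega)]
    omega
  refine (Finset.eq_of_subset_of_card_le ?_ ?_).symm
  · intro x hx
    refine Finset.mem_filter.mpr ⟨Finset.mem_univ _, ?_⟩
    rcases Finset.mem_insert.mp hx with rfl | hx
    · exact map_zero _
    · rcases Finset.mem_union.mp hx with h | h
      · exact par_mem_E h
      · exact par_mem_E h
  · rw [hcard, (count_par hp8).2]

lemma mem_cases (hp : p.Prime) (hp8 : p % 8 = 5) (hgodd : Odd g)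
    (hg2 : orderOf (g : ZMod (2 * p)) = p - 1) [NeZero (2*p)] (x : ZMod (2*p)) :
    x = 0 ∨ x = ((p:ℕ) : ZMod (2*p)) ∨ x ∈ Dcl p g 0 ∨ x ∈ Dcl p g 1 ∨
      x ∈ Ecl p g 0 ∨ x ∈ Ecl p g 1 := by
  have hpar : par p x = 0 ∨ par p x = 1 := by
    have : ∀ a : ZMod 2, a = 0 ∨ a = 1 := by decide
    exact this _
  rcases hpar with h | h
  · have : x ∈ Finset.univ.filter (fun x : ZMod (2*p) => par p x = 0) :=
      Finset.mem_filter.mpr ⟨Finset.mem_univ _, h⟩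
    rw [even_filter hp hp8 hgodd hg2] at this
    rcases Finset.mem_insert.mp this with rfl | h2
    · exact Or.inl rfl
    · rcases Finset.mem_union.mp h2 with h3 | h3
      · exact Or.inr (Or.inr (Or.inr (Or.inr (Or.inl h3))))
      · exact Or.inr (Or.inr (Or.inr (Or.inr (Or.inr h3))))
  · have : x ∈ Finset.univ.filter (fun x : ZMod (2*p) => par p x = 1) :=
      Finset.mem_filter.mpr ⟨Finset.mem_univ _, h⟩
    rw [odd_filter hp8 hgodd hg2] at this
    rcases Finset.mem_insert.mp this with rfl | h2
    · exact Or.inr (Or.inl rfl)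
    · rcases Finset.mem_union.mp h2 with h3 | h3
      · exact Or.inr (Or.inr (Or.inl h3))
      · exact Or.inr (Or.inr (Or.inr (Or.inl h3)))

lemma not_mem_D_of_par0 (hgodd : Odd g) {i : ℕ} {x : ZMod (2*p)}
    (hx : par p x = 0) : x ∉ Dcl p g i := by
  intro h
  rw [par_mem_D hgodd h] at hx
  exact one_ne_zero hx

lemma not_mem_E_of_par1 {i : ℕ} {x : ZMod (2*p)} (hx : par p x = 1) : x ∉ Ecl p g i := by
  intro h
  rw [par_mem_E h] at hx
  exact absurd hx (by decide)

lemma vfun_zero : vfun p g (0 : ZMod (2*p)) = 0 := by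
  rw [vfun, if_pos (Or.inl rfl)]

lemma vfun_D0 {x : ZMod (2*p)} (hx : x ∈ Dcl p g 0) : vfun p g x = 0 := by
  rw [vfun, if_pos (Or.inr hx)]

lemma vfun_D1 (hp8 : p % 8 = 5) (hg2 : orderOf (g : ZMod (2 * p)) = p - 1)
    {x : ZMod (2*p)} (hx : x ∈ Dcl p g 1) : vfun p g x = 1 := by
  rw [vfun, if_neg, if_pos hx]
  rintro (h | h)
  · exact D_ne_zero hp8 hg2 hx h
  · exact Finset.disjoint_left.mp (disj_D hp8 hg2) h hx

lemma vfun_p (hp8 : p % 8 = 5) (hg2 : orderOf (g : ZMod (2 * p)) = p - 1) :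
    vfun p g ((p:ℕ) : ZMod (2*p)) = 2 := by
  rw [vfun, if_neg, if_neg, if_pos (Or.inl rfl)]
  · intro h; exact D_ne_p hp8 hg2 h rfl
  · rintro (h | h)
    · exact p_ne_zero hp8 h
    · exact D_ne_p hp8 hg2 h rfl

lemma vfun_E0 (hp : p.Prime) (hp8 : p % 8 = 5) (hgodd : Odd g)
    (hg2 : orderOf (g : ZMod (2 * p)) = p - 1) [NeZero (2*p)]
    {x : ZMod (2*p)} (hx : x ∈ Ecl p g 0) : vfun p g x = 2 := by
  have hpar : par p x = 0 := par_mem_E hx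
  rw [vfun, if_neg, if_neg, if_pos (Or.inr hx)]
  · exact not_mem_D_of_par0 hgodd hpar
  · rintro (h | h)
    · exact E_ne_zero hp hp8 hg2 hx h
    · exact not_mem_D_of_par0 hgodd hpar h

lemma vfun_E1 (hp : p.Prime) (hp8 : p % 8 = 5) (hgodd : Odd g)
    (hg2 : orderOf (g : ZMod (2 * p)) = p - 1) [NeZero (2*p)]
    {x : ZMod (2*p)} (hx : x ∈ Ecl p g 1) : vfun p g x = 3 := by
  have hpar : par p x = 0 := par_mem_E hx
  rw [vfun, if_neg, if_neg, if_neg]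
  · rintro (h | h)
    · rw [h, par_p hp8] at hpar
      exact one_ne_zero hpar
    · exact Finset.disjoint_left.mp (disj_E hp8 hgodd hg2) h hx
  · exact not_mem_D_of_par0 hgodd hpar
  · rintro (h | h)
    · exact E_ne_zero hp hp8 hg2 hx h
    · exact not_mem_D_of_par0 hgodd hpar h

lemma cast4_half (hp8 : p % 8 = 5) : (((p-1)/2 : ℕ) : ZMod 4) = 2 := by
  rw [← ZMod.natCast_mod, show (p-1)/2 % 4 = 2 by omega]
  norm_num

lemma sum_even (hp : p.Prime) (hp8 : p % 8 = 5) (hgodd : Odd g)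
    (hg2 : orderOf (g : ZMod (2 * p)) = p - 1) [NeZero (2*p)] :
    ∑ x ∈ Finset.univ.filter (fun x : ZMod (2*p) => par p x = 0), vfun p g x = 2 := by
  rw [even_filter hp hp8 hgodd hg2]
  have hnotmem : (0 : ZMod (2*p)) ∉ Ecl p g 0 ∪ Ecl p g 1 := by
    intro h
    rcases Finset.mem_union.mp h with h | h
    · exact E_ne_zero hp hp8 hg2 h rfl
    · exact E_ne_zero hp hp8 hg2 h rfl
  rw [Finset.sum_insert hnotmem, Finset.sum_union (disj_E hp8 hgodd hg2), vfun_zero]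
  rw [Finset.sum_congr rfl (fun x hx => vfun_E0 hp hp8 hgodd hg2 hx),
    Finset.sum_congr rfl (fun x hx => vfun_E1 hp hp8 hgodd hg2 hx),
    Finset.sum_const, Finset.sum_const, card_E hp8 hgodd hg2 (by omega),
    card_E hp8 hgodd hg2 (by omega), nsmul_eq_mul, nsmul_eq_mul, cast4_half hp8]
  decide

lemma sum_odd (hp : p.Prime) (hp8 : p % 8 = 5) (hgodd : Odd g)
    (hg2 : orderOf (g : ZMod (2 * p)) = p - 1) [NeZero (2*p)] :
    ∑ x ∈ Finset.univ.filter (fun x : ZMod (2*p) => par p x = 1), vfun p g x = 0 := by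
  rw [odd_filter hp8 hgodd hg2]
  have hnotmem : ((p:ℕ) : ZMod (2*p)) ∉ Dcl p g 0 ∪ Dcl p g 1 := by
    intro h
    rcases Finset.mem_union.mp h with h | h
    · exact D_ne_p hp8 hg2 h rfl
    · exact D_ne_p hp8 hg2 h rfl
  rw [Finset.sum_insert hnotmem, Finset.sum_union (disj_D hp8 hg2), vfun_p hp8 hg2]
  rw [Finset.sum_congr rfl (fun x hx => vfun_D0 hx),
    Finset.sum_congr rfl (fun x hx => vfun_D1 hp8 hg2 hx),
    Finset.sum_const, Finset.sum_const, card_D hp8 hg2 (by omega),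
    card_D hp8 hg2 (by omega), nsmul_eq_mul, nsmul_eq_mul, cast4_half hp8]
  decide

lemma gbar_ne_zero (hp : p.Prime) (hg1 : orderOf (g : ZMod p) = p - 1) (hp8 : p % 8 = 5) :
    ((g : ℕ) : ZMod p) ≠ 0 := by
  haveI : Fact p.Prime := ⟨hp⟩
  exact (gunitp hp hg1 hp8).ne_zero

lemma two_ne_zerop (hp : p.Prime) (hp8 : p % 8 = 5) : (2 : ZMod p) ≠ 0 := by
  haveI : Fact p.Prime := ⟨hp⟩
  have : ((2:ℕ) : ZMod p) ≠ 0 := by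
    rw [Ne, ZMod.natCast_eq_zero_iff]
    intro hh
    have := Nat.le_of_dvd (by omega) hh
    omega
  simpa using this

lemma two_not_sq (hp : p.Prime) (hp8 : p % 8 = 5) : ¬ IsSquare (2 : ZMod p) := by
  haveI : Fact p.Prime := ⟨hp⟩
  intro h
  rw [ZMod.exists_sq_eq_two_iff (by omega)] at h
  omega

lemma two_eq_pow (hp : p.Prime) (hp8 : p % 8 = 5) (hg1 : orderOf (g : ZMod p) = p - 1) :
    ∃ t, t % 2 = 1 ∧ ((g : ℕ) : ZMod p) ^ t = 2 := by
  haveI : Fact p.Prime := ⟨hp⟩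
  set gbar := ((g : ℕ) : ZMod p) with hgbar
  have hne := gbar_ne_zero hp hg1 hp8
  set w : (ZMod p)ˣ := Units.mk0 gbar hne with hw
  have hwo : orderOf w = p - 1 := by
    rw [← orderOf_units]
    simpa [hw] using hg1
  have htop : Subgroup.zpowers w = ⊤ := by
    apply Subgroup.eq_top_of_card_eq
    rw [Nat.card_zpowers, hwo, Nat.card_eq_fintype_card, ZMod.card_units]
  set u2 : (ZMod p)ˣ := Units.mk0 (2 : ZMod p) (two_ne_zerop hp hp8) with hu2
  have hmem : u2 ∈ Subgroup.zpowers w := htop ▸ Subgroup.mem_top u2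
  have hfin : IsOfFinOrder w := by
    rw [← orderOf_pos_iff, hwo]
    omega
  rw [← hfin.mem_powers_iff_mem_zpowers] at hmem
  obtain ⟨t, ht⟩ := hmem
  have ht' : gbar ^ t = 2 := by
    have := congrArg (Units.val) ht
    simpa [hw, hu2] using this
  rcases Nat.even_or_odd t with he | ho
  · exfalso
    obtain ⟨r, hr⟩ := he
    apply two_not_sq hp hp8
    exact ⟨gbar ^ r, by rw [← ht', hr, pow_add]⟩
  · exact ⟨t, Nat.odd_iff.mp ho, ht'⟩

lemma rho_g : rho p ((g : ℕ) : ZMod (2*p)) = ((g : ℕ) : ZMod p) := map_natCast _ _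

lemma not_sq_D1 (hp : p.Prime) (hp8 : p % 8 = 5) (hg1 : orderOf (g : ZMod p) = p - 1)
    {x : ZMod (2*p)} (hx : x ∈ Dcl p g 1) : ¬ IsSquare (rho p x) := by
  haveI : Fact p.Prime := ⟨hp⟩
  obtain ⟨n, hn, rfl⟩ := mem_Dcl.mp hx
  rw [map_pow, rho_g]
  rintro ⟨z, hz⟩
  set gbar := ((g : ℕ) : ZMod p) with hgbar
  have hne := gbar_ne_zero hp hg1 hp8
  have hzne : z ≠ 0 := by
    intro h
    rw [h, mul_zero] at hz
    exact pow_ne_zero _ hne hz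
  have h1 : gbar ^ ((2*n+1) * ((p-1)/2)) = 1 := by
    rw [pow_mul, hz, ← pow_two, ← pow_mul]
    rw [show 2 * ((p-1)/2) = p - 1 by omega]
    exact ZMod.pow_card_sub_one_eq_one hzne
  have hdvd : p - 1 ∣ (2*n+1) * ((p-1)/2) := by
    have := orderOf_dvd_of_pow_eq_one h1
    rwa [hg1] at this
  obtain ⟨k, hk⟩ := hdvd
  have hhalf : 0 < (p-1)/2 := by omega
  set h2n := (p-1)/2 with hdef
  have hp1 : p - 1 = 2 * h2n := by omega
  rw [hp1] at hk
  have h3 : (2*n+1) * h2n = (2*k) * h2n := by rw [hk]; ring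
  have := Nat.eq_of_mul_eq_mul_right hhalf h3
  omega

lemma sq_E1 (hp : p.Prime) (hp8 : p % 8 = 5) (hg1 : orderOf (g : ZMod p) = p - 1)
    {x : ZMod (2*p)} (hx : x ∈ Ecl p g 1) : IsSquare (rho p x) := by
  haveI : Fact p.Prime := ⟨hp⟩
  obtain ⟨m, hm, rfl⟩ := mem_Ecl.mp hx
  obtain ⟨t, ht, h2⟩ := two_eq_pow hp hp8 hg1
  rw [map_mul, map_pow, rho_g, map_ofNat, ← h2, ← pow_add]
  exact ⟨((g : ℕ) : ZMod p) ^ ((t + (2*m+1))/2), by rw [← pow_add]; congr 1; omega⟩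

lemma rho_ne_zero (hp : p.Prime) (hp8 : p % 8 = 5) (hg1 : orderOf (g : ZMod p) = p - 1)
    {x : ZMod (2*p)} (hx : x ∈ Dcl p g 1 ∪ Ecl p g 1) : rho p x ≠ 0 := by
  haveI : Fact p.Prime := ⟨hp⟩
  have hne := gbar_ne_zero hp hg1 hp8
  rcases Finset.mem_union.mp hx with h | h
  · obtain ⟨n, hn, rfl⟩ := mem_Dcl.mp h
    rw [map_pow, rho_g]
    exact pow_ne_zero _ hne
  · obtain ⟨n, hn, rfl⟩ := mem_Ecl.mp h
    rw [map_mul, map_pow, rho_g, map_ofNat]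
    exact mul_ne_zero (two_ne_zerop hp hp8) (pow_ne_zero _ hne)

lemma injOn_rho (hp : p.Prime) (hp8 : p % 8 = 5) (hg1 : orderOf (g : ZMod p) = p - 1) :
    ∀ x ∈ Dcl p g 1 ∪ Ecl p g 1, ∀ y ∈ Dcl p g 1 ∪ Ecl p g 1,
      rho p x = rho p y → x = y := by
  haveI : Fact p.Prime := ⟨hp⟩
  have hne := gbar_ne_zero hp hg1 hp8
  intro x hx y hy hxy
  rcases Finset.mem_union.mp hx with h1 | h1 <;> rcases Finset.mem_union.mp hy with h2 | h2
  · obtain ⟨n, hn, rfl⟩ := mem_Dcl.mp h1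
    obtain ⟨m, hm, rfl⟩ := mem_Dcl.mp h2
    rw [map_pow, map_pow, rho_g] at hxy
    obtain rfl : n = m := by
      have := pow_injp hp hp8 hg1 (a := 2*n+1) (b := 2*m+1) (by omega) (by omega) hxy
      omega
    rfl
  · exfalso
    exact not_sq_D1 hp hp8 hg1 h1 (hxy ▸ sq_E1 hp hp8 hg1 h2)
  · exfalso
    exact not_sq_D1 hp hp8 hg1 h2 (hxy ▸ sq_E1 hp hp8 hg1 h1)
  · obtain ⟨n, hn, rfl⟩ := mem_Ecl.mp h1
    obtain ⟨m, hm, rfl⟩ := mem_Ecl.mp h2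
    rw [map_mul, map_mul, map_pow, map_pow, rho_g, map_ofNat] at hxy
    have hxy2 := mul_left_cancel₀ (two_ne_zerop hp hp8) hxy
    obtain rfl : n = m := by
      have := pow_injp hp hp8 hg1 (a := 2*n+1) (b := 2*m+1) (by omega) (by omega) hxy2
      omega
    rfl

lemma disj_D1E1 (hgodd : Odd g) : Disjoint (Dcl p g 1) (Ecl p g 1) := by
  rw [Finset.disjoint_left]
  intro x hx1 hx2
  have h1 := par_mem_D hgodd hx1
  have h2 := par_mem_E hx2
  rw [h1] at h2
  exact absurd h2 (by decide)

lemma card_D1E1 (hp8 : p % 8 = 5) (hgodd : Odd g) (hg2 : orderOf (g : ZMod (2 * p)) = p - 1)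
    [NeZero (2*p)] : (Dcl p g 1 ∪ Ecl p g 1).card = p - 1 := by
  rw [Finset.card_union_of_disjoint (disj_D1E1 hgodd), card_D hp8 hg2 (by omega),
    card_E hp8 hgodd hg2 (by omega)]
  omega

lemma image_rho (hp : p.Prime) (hp8 : p % 8 = 5) (hgodd : Odd g)
    (hg1 : orderOf (g : ZMod p) = p - 1) (hg2 : orderOf (g : ZMod (2 * p)) = p - 1)
    [NeZero (2*p)] [NeZero p] :
    (Dcl p g 1 ∪ Ecl p g 1).image (rho p) = (Finset.univ : Finset (ZMod p)).erase 0 := by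
  haveI : Fact p.Prime := ⟨hp⟩
  apply Finset.eq_of_subset_of_card_le
  · intro y hy
    obtain ⟨x, hx, rfl⟩ := Finset.mem_image.mp hy
    exact Finset.mem_erase.mpr ⟨rho_ne_zero hp hp8 hg1 hx, Finset.mem_univ _⟩
  · rw [Finset.card_erase_of_mem (Finset.mem_univ _), Finset.card_univ, ZMod.card,
      Finset.card_image_of_injOn (fun x hx y hy h => injOn_rho hp hp8 hg1 x hx y hy h),
      card_D1E1 hp8 hgodd hg2]

lemma rho_val (x : ZMod (2*p)) [NeZero (2*p)] : (rho p x).val = x.val % p := by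
  have h1 : rho p x = ((x.val : ℕ) : ZMod p) := by
    rw [rho, ZMod.castHom_apply, ← ZMod.natCast_val]
  rw [h1, ZMod.val_natCast]

lemma sum_D1E1 (hp : p.Prime) (hp8 : p % 8 = 5) (hgodd : Odd g)
    (hg1 : orderOf (g : ZMod p) = p - 1) (hg2 : orderOf (g : ZMod (2 * p)) = p - 1)
    [NeZero (2*p)] [NeZero p] :
    ∑ x ∈ Dcl p g 1 ∪ Ecl p g 1, (X : (ZMod 2)[X]) ^ (x.val % p)
      = (∑ i ∈ Finset.range p, (X : (ZMod 2)[X]) ^ i) - 1 := by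
  haveI : Fact p.Prime := ⟨hp⟩
  have h1 : ∀ x ∈ Dcl p g 1 ∪ Ecl p g 1,
      (X : (ZMod 2)[X]) ^ (x.val % p) = (X : (ZMod 2)[X]) ^ ((rho p x).val) := by
    intro x _
    rw [rho_val]
  rw [Finset.sum_congr rfl h1]
  have h4 : ∑ y ∈ (Dcl p g 1 ∪ Ecl p g 1).image (rho p), (X : (ZMod 2)[X]) ^ y.val
      = ∑ x ∈ Dcl p g 1 ∪ Ecl p g 1, (X : (ZMod 2)[X]) ^ ((rho p x).val) :=
    Finset.sum_image (injOn_rho hp hp8 hg1)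
  rw [← h4, image_rho hp hp8 hgodd hg1 hg2]
  have h3 : ∑ i ∈ Finset.range p, (X : (ZMod 2)[X]) ^ i
      = ∑ y : ZMod p, (X : (ZMod 2)[X]) ^ y.val :=
    sum_range_eq_sum_univ (fun x u => (X : (ZMod 2)[X]) ^ u)
  have h5 := Finset.add_sum_erase (Finset.univ : Finset (ZMod p))
    (fun y : ZMod p => (X : (ZMod 2)[X]) ^ y.val) (Finset.mem_univ 0)
  rw [h3, ← h5, ZMod.val_zero, pow_zero]
  ring

lemma tfun (hp : p.Prime) (hp8 : p % 8 = 5) (hgodd : Odd g)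
    (hg2 : orderOf (g : ZMod (2 * p)) = p - 1) [NeZero (2*p)] (x : ZMod (2*p)) :
    (ZMod.castHom (by norm_num : (2:ℕ) ∣ 4) (ZMod 2)) (vfun p g x)
      = if x ∈ Dcl p g 1 ∪ Ecl p g 1 then 1 else 0 := by
  rcases mem_cases hp hp8 hgodd hg2 x with rfl | rfl | h | h | h | h
  · have hnot : (0 : ZMod (2*p)) ∉ Dcl p g 1 ∪ Ecl p g 1 := by
      intro hmem
      rcases Finset.mem_union.mp hmem with h | h
      · exact D_ne_zero hp8 hg2 h rfl
      · exact E_ne_zero hp hp8 hg2 h rfl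
    rw [vfun_zero, if_neg hnot]
    decide
  · have hnot : ((p:ℕ) : ZMod (2*p)) ∉ Dcl p g 1 ∪ Ecl p g 1 := by
      intro hmem
      rcases Finset.mem_union.mp hmem with h | h
      · exact D_ne_p hp8 hg2 h rfl
      · have := par_mem_E h
        rw [par_p hp8] at this
        exact absurd this (by decide)
    rw [vfun_p hp8 hg2, if_neg hnot]
    decide
  · have hnot : x ∉ Dcl p g 1 ∪ Ecl p g 1 := by
      intro hmem
      rcases Finset.mem_union.mp hmem with h2 | h2
      · exact Finset.disjoint_left.mp (disj_D hp8 hg2) h h2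
      · have := par_mem_E h2
        rw [par_mem_D hgodd h] at this
        exact absurd this (by decide)
    rw [vfun_D0 h, if_neg hnot]
    decide
  · rw [vfun_D1 hp8 hg2 h, if_pos (Finset.mem_union_left _ h)]
    decide
  · have hnot : x ∉ Dcl p g 1 ∪ Ecl p g 1 := by
      intro hmem
      rcases Finset.mem_union.mp hmem with h2 | h2
      · have := par_mem_E h
        rw [par_mem_D hgodd h2] at this
        exact absurd this (by decide)
      · exact Finset.disjoint_left.mp (disj_E hp8 hgodd hg2) h h2
    rw [vfun_E0 hp hp8 hgodd hg2 h, if_neg hnot]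
    decide
  · rw [vfun_E1 hp hp8 hgodd hg2 h, if_pos (Finset.mem_union_right _ h)]
    decide

lemma stepA (hp : p.Prime) (hp8 : p % 8 = 5) (hgodd : Odd g)
    (hg2 : orderOf (g : ZMod (2 * p)) = p - 1) [NeZero (2*p)] :
    (X ^ 2 - 1 : (ZMod 4)[X]) ∣ genPoly p g - Polynomial.C 2 := by
  have h1 := dvd_sum_mod (fun u => seqS p g u) (2*p) 2
  have h2 : ∑ u ∈ Finset.range (2*p), Polynomial.C (seqS p g u) * X ^ (u % 2)
      = Polynomial.C (2 : ZMod 4) := by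
    have h3 : ∑ u ∈ Finset.range (2*p), Polynomial.C (seqS p g u) * X ^ (u % 2)
        = ∑ x : ZMod (2*p), Polynomial.C (vfun p g x) * X ^ (x.val % 2) := by
      have := sum_range_eq_sum_univ
        (fun (x : ZMod (2*p)) (u : ℕ) => Polynomial.C (vfun p g x) * (X : (ZMod 4)[X]) ^ (u % 2))
      simpa [seqS_eq_vfun] using this
    rw [h3]
    rw [← Finset.sum_filter_add_sum_filter_not Finset.univ (fun x : ZMod (2*p) => par p x = 0)]
    have hcongr : (Finset.univ.filter (fun x : ZMod (2*p) => ¬ (par p x = 0))) =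
        (Finset.univ.filter (fun x : ZMod (2*p) => par p x = 1)) := by
      apply Finset.filter_congr
      intro x _
      have : ∀ a : ZMod 2, (¬ (a = 0)) ↔ a = 1 := by decide
      simp [this]
    rw [hcongr]
    have he : ∀ x ∈ Finset.univ.filter (fun x : ZMod (2*p) => par p x = 0),
        Polynomial.C (vfun p g x) * (X : (ZMod 4)[X]) ^ (x.val % 2) = Polynomial.C (vfun p g x) := by
      intro x hx
      have hpar := (Finset.mem_filter.mp hx).2
      rw [par_apply] at hpar
      have : x.val % 2 = 0 := by
        have := (ZMod.natCast_eq_zero_iff x.val 2).mp hpar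
        omega
      rw [this, pow_zero, mul_one]
    have ho : ∀ x ∈ Finset.univ.filter (fun x : ZMod (2*p) => par p x = 1),
        Polynomial.C (vfun p g x) * (X : (ZMod 4)[X]) ^ (x.val % 2)
          = Polynomial.C (vfun p g x) * X := by
      intro x hx
      have hpar := (Finset.mem_filter.mp hx).2
      rw [par_apply] at hpar
      have h01 : x.val % 2 = 0 ∨ x.val % 2 = 1 := by omega
      rcases h01 with h0 | h0
      · exfalso
        rw [cast2_zero h0] at hpar
        exact absurd hpar (by decide)
      · rw [h0, pow_one]
    rw [Finset.sum_congr rfl he, Finset.sum_congr rfl ho, ← Finset.sum_mul]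
    have e1 : ∑ x ∈ Finset.univ.filter (fun x : ZMod (2*p) => par p x = 0),
        Polynomial.C (vfun p g x) = Polynomial.C (2 : ZMod 4) := by
      rw [← map_sum, sum_even hp hp8 hgodd hg2]
    have e2 : ∑ x ∈ Finset.univ.filter (fun x : ZMod (2*p) => par p x = 1),
        Polynomial.C (vfun p g x) = Polynomial.C (0 : ZMod 4) := by
      rw [← map_sum, sum_odd hp hp8 hgodd hg2]
    rw [e1, e2]
    simp
  rw [genPoly, ← h2]
  exact h1

lemma stepB (hp : p.Prime) (hp8 : p % 8 = 5) (hgodd : Odd g)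
    (hg1 : orderOf (g : ZMod p) = p - 1) (hg2 : orderOf (g : ZMod (2 * p)) = p - 1)
    [NeZero (2*p)] [NeZero p] :
    ∃ h : (ZMod 2)[X], (genPoly p g).map (ZMod.castHom (by norm_num : (2:ℕ) ∣ 4) (ZMod 2))
      = 1 + (∑ i ∈ Finset.range p, (X : (ZMod 2)[X]) ^ i) * h := by
  set φ := ZMod.castHom (by norm_num : (2:ℕ) ∣ 4) (ZMod 2) with hφ
  set G := ∑ i ∈ Finset.range p, (X : (ZMod 2)[X]) ^ i with hG
  have hT : (genPoly p g).map φ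
      = ∑ u ∈ Finset.range (2*p), Polynomial.C (φ (seqS p g u)) * X ^ u := by
    rw [genPoly, Polynomial.map_sum]
    refine Finset.sum_congr rfl (fun u _ => ?_)
    rw [Polynomial.map_mul, Polynomial.map_pow, Polynomial.map_C, Polynomial.map_X]
  have h1 := dvd_sum_mod (fun u => φ (seqS p g u)) (2*p) p
  have h2 : ∑ u ∈ Finset.range (2*p), Polynomial.C (φ (seqS p g u)) * X ^ (u % p)
      = G - 1 := by
    have h3 : ∑ u ∈ Finset.range (2*p), Polynomial.C (φ (seqS p g u)) * X ^ (u % p)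
        = ∑ x : ZMod (2*p), Polynomial.C (φ (vfun p g x)) * X ^ (x.val % p) := by
      have := sum_range_eq_sum_univ
        (fun (x : ZMod (2*p)) (u : ℕ) => Polynomial.C (φ (vfun p g x)) * (X : (ZMod 2)[X]) ^ (u % p))
      simpa [seqS_eq_vfun] using this
    rw [h3]
    have h4 : ∀ x : ZMod (2*p), Polynomial.C (φ (vfun p g x)) * (X : (ZMod 2)[X]) ^ (x.val % p)
        = if x ∈ Dcl p g 1 ∪ Ecl p g 1 then (X : (ZMod 2)[X]) ^ (x.val % p) else 0 := by
      intro x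
      rw [tfun hp hp8 hgodd hg2 x]
      split_ifs
      · rw [Polynomial.C_1, one_mul]
      · rw [Polynomial.C_0, zero_mul]
    rw [Finset.sum_congr rfl (fun x _ => h4 x), Finset.sum_ite_mem, Finset.univ_inter]
    exact sum_D1E1 hp hp8 hgodd hg1 hg2
  rw [hT] at *
  rw [h2] at h1
  have hGdvd : G ∣ (X : (ZMod 2)[X]) ^ p - 1 := ⟨X - 1, (geom_sum_mul X p).symm⟩
  obtain ⟨k, hk⟩ := hGdvd.trans h1
  have h2z : ((1:(ZMod 2)[X]) + 1) = 0 := by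
    rw [← Polynomial.C_1, ← Polynomial.C_add]
    norm_num
    decide
  refine ⟨k + 1, ?_⟩
  linear_combination hk - (1 : (ZMod 2)[X]) * h2z

lemma lowerBound (hp : p.Prime) (hp8 : p % 8 = 5) (hgodd : Odd g)
    (hg1 : orderOf (g : ZMod p) = p - 1) (hg2 : orderOf (g : ZMod (2 * p)) = p - 1)
    (C : (ZMod 4)[X]) (hC0 : C.eval 0 = 1)
    (hdvd : (X ^ (2*p) - 1 : (ZMod 4)[X]) ∣ genPoly p g * C) :
    2*p ≤ C.natDegree := by
  haveI : NeZero (2*p) := ⟨by omega⟩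
  haveI : NeZero p := ⟨by omega⟩
  haveI : Fact p.Prime := ⟨hp⟩
  set φ := ZMod.castHom (by norm_num : (2:ℕ) ∣ 4) (ZMod 2) with hφ
  set c := C.map φ with hc
  have hc0 : c.coeff 0 = 1 := by
    rw [hc, Polynomial.coeff_map, Polynomial.coeff_zero_eq_eval_zero, hC0, map_one]
  have hcne : c ≠ 0 := by
    intro h
    rw [h, Polynomial.coeff_zero] at hc0
    exact absurd hc0 (by decide)
  -- Step A
  have hone : ((1:(ZMod 2)[X]) + 1) = 0 := by
    rw [← Polynomial.C_1, ← Polynomial.C_add]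
    norm_num
    decide
  have hdvd2 : (X ^ 2 - 1 : (ZMod 4)[X]) ∣ genPoly p g * C := by
    refine dvd_trans ?_ hdvd
    have h1 : ((X : (ZMod 4)[X]) ^ (2*p)) = (X^2)^p := by rw [← pow_mul]
    rw [h1]
    simpa using sub_dvd_pow_sub_pow ((X : (ZMod 4)[X])^2) 1 p
  have hstepA := stepA hp hp8 hgodd hg2 (g := g)
  have hA0 : (X ^ 2 - 1 : (ZMod 4)[X]) ∣ Polynomial.C 2 * C := by
    have heq : Polynomial.C (2 : ZMod 4) * C
        = genPoly p g * C - (genPoly p g - Polynomial.C 2) * C := by ring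
    rw [heq]
    exact dvd_sub hdvd2 (hstepA.mul_right C)
  obtain ⟨Q, hQ⟩ := hA0
  have hmapX2 : (X ^ 2 - 1 : (ZMod 4)[X]).map φ = (X ^ 2 - 1 : (ZMod 2)[X]) := by
    rw [Polynomial.map_sub, Polynomial.map_pow, Polynomial.map_X, Polynomial.map_one]
  have hmapQ : (X ^ 2 - 1 : (ZMod 2)[X]) * (Q.map φ) = 0 := by
    have h2 := congrArg (Polynomial.map φ) hQ
    rw [Polynomial.map_mul, Polynomial.map_mul, Polynomial.map_C, hmapX2] at h2
    have hφ2 : φ (2 : ZMod 4) = 0 := by decide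
    rw [hφ2, Polynomial.C_0, zero_mul] at h2
    exact h2.symm
  have hX2ne : (X ^ 2 - 1 : (ZMod 2)[X]) ≠ 0 := by
    intro h
    have := congrArg (fun q => Polynomial.coeff q 0) h
    simp [Polynomial.coeff_X_pow] at this
  have hQ0 : Q.map φ = 0 := by
    rcases mul_eq_zero.mp hmapQ with h | h
    · exact absurd h hX2ne
    · exact h
  obtain ⟨Q', hQ'⟩ := exists_halve hQ0
  have h2CQ : Polynomial.C (2 : ZMod 4) * (C - (X ^ 2 - 1) * Q') = 0 := by
    linear_combination hQ + (X ^ 2 - 1 : (ZMod 4)[X]) * hQ'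
  have hmapC := map_eq_zero_of_two_mul h2CQ
  have hA : (X ^ 2 - 1 : (ZMod 2)[X]) ∣ c := by
    rw [Polynomial.map_sub, Polynomial.map_mul, hmapX2, sub_eq_zero] at hmapC
    exact ⟨Q'.map φ, hmapC⟩
  -- Step B
  set G := ∑ i ∈ Finset.range p, (X : (ZMod 2)[X]) ^ i with hG
  obtain ⟨R, hR⟩ := hdvd
  have hTc : (X ^ (2*p) - 1 : (ZMod 2)[X]) ∣ (genPoly p g).map φ * c := by
    refine ⟨R.map φ, ?_⟩
    have h2 := congrArg (Polynomial.map φ) hR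
    rw [Polynomial.map_mul, Polynomial.map_mul, Polynomial.map_sub, Polynomial.map_pow,
      Polynomial.map_X, Polynomial.map_one] at h2
    exact h2
  have hsq : ∀ Y : (ZMod 2)[X], (Y - 1) ^ 2 = Y ^ 2 - 1 := by
    intro Y
    linear_combination ((1 : (ZMod 2)[X]) - Y) * hone
  have char2 : ((X : (ZMod 2)[X]) ^ p - 1) ^ 2 = X ^ (2*p) - 1 := by
    rw [hsq, ← pow_mul, Nat.mul_comm p 2]
  have hfac : (X ^ (2*p) - 1 : (ZMod 2)[X]) = (X - 1) ^ 2 * G ^ 2 := by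
    rw [← char2, ← geom_sum_mul]
    ring
  have hG2Tc : G ^ 2 ∣ (genPoly p g).map φ * c := by
    refine dvd_trans ⟨(X - 1) ^ 2, ?_⟩ hTc
    rw [hfac]
    ring
  obtain ⟨h, hTeq⟩ := stepB hp hp8 hgodd hg1 hg2
  have hcop : IsCoprime G ((genPoly p g).map φ) := by
    refine ⟨-h, 1, ?_⟩
    rw [hTeq]
    ring
  have hGc : G ^ 2 ∣ c := by
    have hcop2 : IsCoprime (G ^ 2) ((genPoly p g).map φ) := hcop.pow_left
    exact hcop2.dvd_of_dvd_mul_left hG2Tc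
  have hXC : ((X : (ZMod 2)[X]) - 1) ^ 2 ∣ c := by
    rw [hsq]
    exact hA
  have heval : G.eval 1 = 1 := by
    rw [hG, Polynomial.eval_finset_sum]
    simp only [Polynomial.eval_pow, Polynomial.eval_X, one_pow]
    rw [Finset.sum_const, Finset.card_range, nsmul_eq_mul, mul_one]
    exact cast2_one (by omega)
  have hdvd1 : ((X : (ZMod 2)[X]) - 1) ∣ G - 1 := by
    have h1 := Polynomial.X_sub_C_dvd_sub_C_eval (a := (1 : ZMod 2)) (p := G)
    rw [heval, Polynomial.C_1] at h1
    exact h1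
  obtain ⟨k2, hk2⟩ := hdvd1
  have hcopXG : IsCoprime ((X : (ZMod 2)[X]) - 1) G := by
    refine ⟨-k2, 1, ?_⟩
    linear_combination hk2
  have hbig : ((X : (ZMod 2)[X]) - 1) ^ 2 * G ^ 2 ∣ c := hcopXG.pow.mul_dvd hXC hGc
  have hdvc : (X ^ (2*p) - 1 : (ZMod 2)[X]) ∣ c := by
    rw [hfac]
    exact hbig
  have hdeg : 2*p ≤ c.natDegree := by
    have h1 := Polynomial.natDegree_le_of_dvd hdvc hcne
    have h2 : (X ^ (2*p) - 1 : (ZMod 2)[X]).natDegree = 2*p := by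
      rw [← Polynomial.C_1, Polynomial.natDegree_X_pow_sub_C]
    omega
  calc 2*p ≤ c.natDegree := hdeg
    _ ≤ C.natDegree := Polynomial.natDegree_map_le

end Main
end QAux

theorem stmt0 (p g : ℕ) (hp : p.Prime) (hpodd : Odd p) (hp8 : p % 8 = 5)
    (hgodd : Odd g)
    (hg1 : orderOf (g : ZMod p) = p - 1)
    (hg2 : orderOf (g : ZMod (2 * p)) = p - 1) :
    linComplexity p g = 2 * p := by
  haveI : Nontrivial (ZMod 4) := ⟨⟨0, 1, by decide⟩⟩
  have hmem : 2 * p ∈ { L | ∃ C : Polynomial (ZMod 4), C.eval 0 = 1 ∧ C.natDegree = L ∧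
      (Polynomial.X ^ (2 * p) - 1) ∣ genPoly p g * C } := by
    refine ⟨1 - Polynomial.X ^ (2 * p), ?_, ?_, ?_⟩
    · rw [Polynomial.eval_sub, Polynomial.eval_one, Polynomial.eval_pow, Polynomial.eval_X,
        zero_pow (by omega : 2*p ≠ 0), sub_zero]
    · have h1 : (1 - Polynomial.X ^ (2*p) : (ZMod 4)[X])
          = -(Polynomial.X ^ (2*p) - Polynomial.C 1) := by
        rw [Polynomial.C_1]; ring
      rw [h1, Polynomial.natDegree_neg, Polynomial.natDegree_X_pow_sub_C]
    · exact ⟨-(genPoly p g), by ring⟩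
  have hlb : ∀ L ∈ { L | ∃ C : Polynomial (ZMod 4), C.eval 0 = 1 ∧ C.natDegree = L ∧
      (Polynomial.X ^ (2 * p) - 1) ∣ genPoly p g * C }, 2 * p ≤ L := by
    rintro L ⟨C, hC0, rfl, hdvd⟩
    exact QAux.lowerBound hp hp8 hgodd hg1 hg2 C hC0 hdvd
  rw [linComplexity]
  exact le_antisymm (Nat.sInf_le hmem) (hlb _ (Nat.sInf_mem ⟨_, hmem⟩))
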